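/- arXiv:1008.4232 — 2 statements merged into one kernel-verified Lean document; each statement's English description precedes it below -/
import Mathlib

section
/- For any probabilistic algorithm of choosing between two experts (i.e., any sequence of functions p_t giving the probability P{I_t = 1} of following expert 1 at step t as a function of the experts' past losses) and for any ε with 0 < ε < 1, there exist two sequences of nonnegative one-step losses s^1_t, s^2_t (t = 1, 2, …) such that, with v_0 = 1, the volume v_t tends to infinity as t → ∞ and, for all t: fluc(t) ≥ 1 − ε and (1/v_t)·E(s_{1:t} − min_{i=1,2} s^i_{1:t}) ≥ (1 − ε)/2, where E(s_{1:t}) = Σ_{j=1}^t (s^1_j · p_j + s^2_j · (1 − p_j)) is the expected cumulative loss of the algorithm. -/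
open Filter Finset

noncomputable section

/-- The volume of the two-expert game with initial volume `v_0 = 1`:
`v_t = 1 + ∑_{j=1}^t max(|s^1_j|, |s^2_j|)`. -/
def vol2 (s1 s2 : ℕ → ℝ) (t : ℕ) : ℝ :=
  1 + ∑ j ∈ Finset.Icc 1 t, max |s1 j| |s2 j|

/-- The expected cumulative loss `E(s_{1:t})` of the probabilistic algorithm `p`
(where `p t s1 s2` is the probability of following expert 1 at step `t`). -/
def expCumLoss (p : ℕ → (ℕ → ℝ) → (ℕ → ℝ) → ℝ) (s1 s2 : ℕ → ℝ) (t : ℕ) : ℝ :=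
  ∑ j ∈ Finset.Icc 1 t, (s1 j * p j s1 s2 + s2 j * (1 - p j s1 s2))

noncomputable def adv (p : ℕ → (ℕ → ℝ) → (ℕ → ℝ) → ℝ) (K : ℝ) : ℕ → ℝ × ℝ
  | 0 => (0, 0)
  | (t+1) =>
    let s1' : ℕ → ℝ := fun j => if _ : j < t + 1 then (adv p K j).1 else 0
    let s2' : ℕ → ℝ := fun j => if _ : j < t + 1 then (adv p K j).2 else 0
    let M := K * (1 + ∑ j ∈ Finset.Icc 1 t, max |s1' j| |s2' j|)
    if 1/2 ≤ p (t+1) s1' s2' then (M, 0) else (0, M)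

variable (p : ℕ → (ℕ → ℝ) → (ℕ → ℝ) → ℝ) (K : ℝ)

lemma adv_succ (hpast : ∀ (t : ℕ) (s1 s2 s1' s2' : ℕ → ℝ),
      (∀ j, j < t → s1 j = s1' j ∧ s2 j = s2' j) → p t s1 s2 = p t s1' s2') (t : ℕ) :
    adv p K (t+1) =
      if 1/2 ≤ p (t+1) (fun j => (adv p K j).1) (fun j => (adv p K j).2) then
        (K * vol2 (fun j => (adv p K j).1) (fun j => (adv p K j).2) t, 0)
      else
        (0, K * vol2 (fun j => (adv p K j).1) (fun j => (adv p K j).2) t) := by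
  rw [adv]
  have h1 : p (t+1) (fun j => if _ : j < t + 1 then (adv p K j).1 else 0)
      (fun j => if _ : j < t + 1 then (adv p K j).2 else 0)
      = p (t+1) (fun j => (adv p K j).1) (fun j => (adv p K j).2) := by
    apply hpast
    intro j hj
    simp [hj]
  have h2 : ∑ j ∈ Finset.Icc 1 t, max |if _ : j < t + 1 then (adv p K j).1 else 0|
      |if _ : j < t + 1 then (adv p K j).2 else 0|
      = ∑ j ∈ Finset.Icc 1 t, max |(adv p K j).1| |(adv p K j).2| := by
    apply Finset.sum_congr rfl
    intro j hj
    have : j < t + 1 := by simp at hj; omega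
    simp [this]
  simp only [vol2, h1, h2]

lemma adv_nonneg (hK : 0 ≤ K)
    (hpast : ∀ (t : ℕ) (s1 s2 s1' s2' : ℕ → ℝ),
      (∀ j, j < t → s1 j = s1' j ∧ s2 j = s2' j) → p t s1 s2 = p t s1' s2') (t : ℕ) :
    0 ≤ (adv p K t).1 ∧ 0 ≤ (adv p K t).2 := by
  cases t with
  | zero => simp [adv]
  | succ u =>
    rw [adv_succ p K hpast]
    have hM : 0 ≤ K * vol2 (fun j => (adv p K j).1) (fun j => (adv p K j).2) u := by
      apply mul_nonneg hK
      unfold vol2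
      positivity
    split <;> simp [hM]

lemma vol2_zero (s1 s2 : ℕ → ℝ) : vol2 s1 s2 0 = 1 := by simp [vol2]

lemma vol2_succ_adv (hK : 0 ≤ K)
    (hpast : ∀ (t : ℕ) (s1 s2 s1' s2' : ℕ → ℝ),
      (∀ j, j < t → s1 j = s1' j ∧ s2 j = s2' j) → p t s1 s2 = p t s1' s2') (t : ℕ) :
    vol2 (fun j => (adv p K j).1) (fun j => (adv p K j).2) (t+1)
      = (1 + K) * vol2 (fun j => (adv p K j).1) (fun j => (adv p K j).2) t := by
  set s1 : ℕ → ℝ := fun j => (adv p K j).1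
  set s2 : ℕ → ℝ := fun j => (adv p K j).2
  have hv : (0:ℝ) ≤ vol2 s1 s2 t := by unfold vol2; positivity
  have hmax : max |s1 (t+1)| |s2 (t+1)| = K * vol2 s1 s2 t := by
    have := adv_succ p K hpast t
    have hM : 0 ≤ K * vol2 s1 s2 t := mul_nonneg hK hv
    simp only [s1, s2]
    rw [this]
    split <;> simp [abs_of_nonneg hM, max_eq_left, max_eq_right, hM, abs_of_nonneg hK, abs_of_nonneg (show (0:ℝ) ≤ vol2 (fun j => (adv p K j).1) (fun j => (adv p K j).2) t from hv)] <;> exact hM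
  have : vol2 s1 s2 (t+1) = vol2 s1 s2 t + max |s1 (t+1)| |s2 (t+1)| := by
    unfold vol2
    rw [Finset.sum_Icc_succ_top (by omega : 1 ≤ t + 1)]
    ring
  rw [this, hmax]; ring

lemma vol2_adv_eq (hK : 0 ≤ K)
    (hpast : ∀ (t : ℕ) (s1 s2 s1' s2' : ℕ → ℝ),
      (∀ j, j < t → s1 j = s1' j ∧ s2 j = s2' j) → p t s1 s2 = p t s1' s2') (t : ℕ) :
    vol2 (fun j => (adv p K j).1) (fun j => (adv p K j).2) t = (1 + K) ^ t := by
  induction t with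
  | zero => simp [vol2]
  | succ u ih => rw [vol2_succ_adv p K hK hpast, ih]; ring

theorem statement0
    (p : ℕ → (ℕ → ℝ) → (ℕ → ℝ) → ℝ)
    (hp : ∀ t s1 s2, 0 ≤ p t s1 s2 ∧ p t s1 s2 ≤ 1)
    (hpast : ∀ (t : ℕ) (s1 s2 s1' s2' : ℕ → ℝ),
      (∀ j, j < t → s1 j = s1' j ∧ s2 j = s2' j) → p t s1 s2 = p t s1' s2')
    (ε : ℝ) (hε0 : 0 < ε) (hε1 : ε < 1) :
    ∃ s1 s2 : ℕ → ℝ,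
      (∀ t, 0 ≤ s1 t) ∧ (∀ t, 0 ≤ s2 t) ∧
      Tendsto (vol2 s1 s2) atTop atTop ∧
      (∀ t : ℕ, 1 ≤ t →
        (vol2 s1 s2 t - vol2 s1 s2 (t - 1)) / vol2 s1 s2 t ≥ 1 - ε ∧
        (1 / vol2 s1 s2 t) *
          (expCumLoss p s1 s2 t -
            min (∑ j ∈ Finset.Icc 1 t, s1 j) (∑ j ∈ Finset.Icc 1 t, s2 j))
          ≥ (1 - ε) / 2) := by
  set K : ℝ := 3 / ε with hKdef
  have hK : 0 < K := by positivity
  have hεK : ε * K = 3 := by rw [hKdef]; field_simp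
  set s1 : ℕ → ℝ := fun j => (adv p K j).1 with hs1def
  set s2 : ℕ → ℝ := fun j => (adv p K j).2 with hs2def
  have hnn := adv_nonneg p K hK.le hpast
  have hs1 : ∀ t, 0 ≤ s1 t := fun t => (hnn t).1
  have hs2 : ∀ t, 0 ≤ s2 t := fun t => (hnn t).2
  have hvol : ∀ t, vol2 s1 s2 t = (1 + K) ^ t := vol2_adv_eq p K hK.le hpast
  refine ⟨s1, s2, hs1, hs2, ?_, ?_⟩
  · have : Tendsto (fun t : ℕ => (1 + K) ^ t) atTop atTop :=
      tendsto_pow_atTop_atTop_of_one_lt (by linarith)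
    exact this.congr (fun t => (hvol t).symm)
  · intro t ht
    obtain ⟨u, rfl⟩ : ∃ u, t = u + 1 := ⟨t - 1, by omega⟩
    have hvu : (0:ℝ) < (1 + K) ^ u := by positivity
    have hvu1 : (1:ℝ) ≤ (1 + K) ^ u := one_le_pow₀ (by linarith)
    have hvt : (0:ℝ) < (1 + K) ^ (u + 1) := by positivity
    have hpow : (1 + K) ^ (u + 1) = (1 + K) * (1 + K) ^ u := by ring
    have hstep := adv_succ p K hpast u
    have hvolu : vol2 s1 s2 u = (1 + K) ^ u := hvol u
    constructor
    · rw [hvol, show u + 1 - 1 = u from rfl, hvol, ge_iff_le, le_div_iff₀ hvt, hpow]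
      nlinarith [mul_pos hε0 hvu]
    · -- regret bound
      set q := p (u + 1) s1 s2 with hq
      have hq0 := (hp (u + 1) s1 s2).1
      have hq1 := (hp (u + 1) s1 s2).2
      have hM : (0:ℝ) ≤ K * (1 + K) ^ u := by positivity
      -- values at step u+1
      have hvolu' : vol2 (fun j => (adv p K j).1) (fun j => (adv p K j).2) u = (1+K)^u := hvolu
      have hstep' : adv p K (u+1) = if 1/2 ≤ q then (K * (1+K)^u, 0) else (0, K * (1+K)^u) := by
        rw [hstep, hvolu']
      have hval : (s1 (u+1) = K * (1+K)^u ∧ s2 (u+1) = 0 ∧ 1/2 ≤ q) ∨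
          (s1 (u+1) = 0 ∧ s2 (u+1) = K * (1+K)^u ∧ q < 1/2) := by
        have e1 : s1 (u+1) = (adv p K (u+1)).1 := rfl
        have e2 : s2 (u+1) = (adv p K (u+1)).2 := rfl
        by_cases h : 1/2 ≤ q
        · left; rw [e1, e2, hstep', if_pos h]; exact ⟨rfl, rfl, h⟩
        · right; rw [e1, e2, hstep', if_neg h]; exact ⟨rfl, rfl, lt_of_not_ge h⟩
      -- step expected loss lower bound
      have hstep_e : K * (1+K)^u / 2 ≤ s1 (u+1) * q + s2 (u+1) * (1 - q) := by
        rcases hval with ⟨h1, h2, h3⟩ | ⟨h1, h2, h3⟩ <;> rw [h1, h2] <;> nlinarith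
      -- total expected loss lower bound
      have hE : K * (1+K)^u / 2 ≤ expCumLoss p s1 s2 (u+1) := by
        refine le_trans hstep_e ?_
        unfold expCumLoss
        refine Finset.single_le_sum (f := fun j => s1 j * p j s1 s2 + s2 j * (1 - p j s1 s2))
          (fun j _ => ?_) (by simp)
        have hpj := hp j s1 s2
        exact add_nonneg (mul_nonneg (hs1 j) hpj.1)
          (mul_nonneg (hs2 j) (by linarith [hpj.2]))
      -- min bound
      have hsum_le : ∀ (f : ℕ → ℝ), (∀ j, 0 ≤ f j) → (∀ j, f j ≤ max |s1 j| |s2 j|) →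
          ∑ j ∈ Finset.Icc 1 u, f j ≤ (1+K)^u - 1 := by
        intro f hf hfm
        have : ∑ j ∈ Finset.Icc 1 u, f j ≤ ∑ j ∈ Finset.Icc 1 u, max |s1 j| |s2 j| :=
          Finset.sum_le_sum (fun j _ => hfm j)
        have hv : 1 + ∑ j ∈ Finset.Icc 1 u, max |s1 j| |s2 j| = (1+K)^u := hvolu
        linarith
      have hmin : min (∑ j ∈ Finset.Icc 1 (u+1), s1 j) (∑ j ∈ Finset.Icc 1 (u+1), s2 j)
          ≤ (1+K)^u - 1 := by
        rcases hval with ⟨h1, h2, h3⟩ | ⟨h1, h2, h3⟩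
        · refine le_trans (min_le_right _ _) ?_
          rw [Finset.sum_Icc_succ_top (by omega : 1 ≤ u + 1), h2, add_zero]
          exact hsum_le s2 hs2 (fun j => le_trans (le_abs_self _) (le_max_right _ _))
        · refine le_trans (min_le_left _ _) ?_
          rw [Finset.sum_Icc_succ_top (by omega : 1 ≤ u + 1), h1, add_zero]
          exact hsum_le s1 hs1 (fun j => le_trans (le_abs_self _) (le_max_left _ _))
      have key : (1 - ε)/2 * (1+K)^(u+1) ≤ expCumLoss p s1 s2 (u+1) -
          min (∑ j ∈ Finset.Icc 1 (u+1), s1 j) (∑ j ∈ Finset.Icc 1 (u+1), s2 j) := by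
        rw [hpow]
        nlinarith [mul_pos hε0 hvu, mul_le_mul_of_nonneg_left hvu1 hε0.le]
      rw [hvol, ge_iff_le]
      calc (1 - ε)/2 = (1/(1+K)^(u+1)) * ((1-ε)/2 * (1+K)^(u+1)) := by field_simp
        _ ≤ _ := mul_le_mul_of_nonneg_left key (by positivity)
end
end

section
/- Let N ≥ 2, let I and J be random variables with values in {1, …, N}, let d^1, …, d^N ∈ ℝ be numbers with |d^j| ≤ Δ for all j where Δ ≥ 0, and suppose P{I = j} ≤ exp{(3/a)·r}·P{J = j} for all j, where a > 0 and 0 ≤ r ≤ 1. If moreover |E(d^J)| ≤ Δ, then E(d^I) ≤ E(d^J) + 2(e^{3/a} − 1)·r·Δ. -/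
open MeasureTheory ProbabilityTheory

lemma aux_int_eq {N : ℕ} {Ω : Type} [MeasurableSpace Ω] (P : Measure Ω)
    [IsProbabilityMeasure P] (X : Ω → Fin N) (hX : Measurable X) (d : Fin N → ℝ) :
    ∫ ω, d (X ω) ∂P = ∑ j, (P {ω | X ω = j}).toReal * d j := by
  have h1 : ∫ ω, d (X ω) ∂P = ∫ j, d j ∂(P.map X) :=
    (integral_map hX.aemeasurable (measurable_from_top (f := d)).aestronglyMeasurable).symm
  rw [h1, integral_fintype .of_finite]
  simp only [Measure.real]
  refine Finset.sum_congr rfl fun j _ => ?_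
  rw [Measure.map_apply hX (measurableSet_singleton j)]
  simp [Set.preimage, smul_eq_mul, Measure.real]

lemma aux_sum_one {N : ℕ} {Ω : Type} [MeasurableSpace Ω] (P : Measure Ω)
    [IsProbabilityMeasure P] (X : Ω → Fin N) (hX : Measurable X) :
    ∑ j, (P {ω | X ω = j}).toReal = 1 := by
  have : ∑ j, P {ω | X ω = j} = 1 := by
    have := sum_measure_preimage_singleton (μ := P) (f := X)
      (s := Finset.univ) (fun j _ => hX (measurableSet_singleton j))
    have h2 : ∀ j : Fin N, {ω | X ω = j} = X ⁻¹' {j} := fun j => rfl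
    simp only [h2, this]
    simp [Set.eq_univ_iff_forall, measure_univ]
  rw [← ENNReal.toReal_sum (fun j _ => measure_ne_top P _), this, ENNReal.toReal_one]

theorem statement6 {N : ℕ} (hN : 2 ≤ N)
    (Ω : Type) [MeasurableSpace Ω] (P : Measure Ω) [IsProbabilityMeasure P]
    (I J : Ω → Fin N) (hI : Measurable I) (hJ : Measurable J)
    (d : Fin N → ℝ) (Δ a r : ℝ) (hΔ : 0 ≤ Δ) (ha : 0 < a)
    (hr0 : 0 ≤ r) (hr1 : r ≤ 1)
    (hd : ∀ j, |d j| ≤ Δ)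
    (hcomp : ∀ j : Fin N,
      P {ω | I ω = j} ≤ ENNReal.ofReal (Real.exp ((3 / a) * r)) * P {ω | J ω = j})
    (hEJ : |∫ ω, d (J ω) ∂P| ≤ Δ) :
    (∫ ω, d (I ω) ∂P) ≤ (∫ ω, d (J ω) ∂P) + 2 * (Real.exp (3 / a) - 1) * r * Δ := by
  set c : ℝ := 3 / a with hc
  have hc0 : 0 ≤ c := by positivity
  set pI : Fin N → ℝ := fun j => (P {ω | I ω = j}).toReal with hpI
  set pJ : Fin N → ℝ := fun j => (P {ω | J ω = j}).toReal with hpJ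
  have hEI : ∫ ω, d (I ω) ∂P = ∑ j, pI j * d j := aux_int_eq P I hI d
  have hEJ' : ∫ ω, d (J ω) ∂P = ∑ j, pJ j * d j := aux_int_eq P J hJ d
  have hsI : ∑ j, pI j = 1 := aux_sum_one P I hI
  have hsJ : ∑ j, pJ j = 1 := aux_sum_one P J hJ
  have hpJ0 : ∀ j, 0 ≤ pJ j := fun j => ENNReal.toReal_nonneg
  have hle : ∀ j, pI j ≤ Real.exp (c * r) * pJ j := by
    intro j
    have h := hcomp j
    have := ENNReal.toReal_le_toReal (measure_ne_top P _) (by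
      refine ENNReal.mul_ne_top ENNReal.ofReal_ne_top (measure_ne_top P _)) |>.mpr h
    rwa [ENNReal.toReal_mul, ENNReal.toReal_ofReal (Real.exp_pos _).le] at this
  have hdΔ : ∀ j, 0 ≤ d j + Δ := by
    intro j
    have := abs_le.mp (hd j)
    linarith [this.1]
  set EI := ∑ j, pI j * d j with hEIdef
  set EJ := ∑ j, pJ j * d j with hEJdef
  have key : EI + Δ ≤ Real.exp (c * r) * (EJ + Δ) := by
    have h1 : EI + Δ = ∑ j, pI j * (d j + Δ) := by
      simp [mul_add, Finset.sum_add_distrib, ← Finset.sum_mul, hsI, hEIdef]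
    have h2 : EJ + Δ = ∑ j, pJ j * (d j + Δ) := by
      simp [mul_add, Finset.sum_add_distrib, ← Finset.sum_mul, hsJ, hEJdef]
    rw [h1, h2, Finset.mul_sum]
    refine Finset.sum_le_sum fun j _ => ?_
    rw [← mul_assoc]
    exact mul_le_mul_of_nonneg_right (hle j) (hdΔ j)
  have hexp : Real.exp (c * r) ≤ 1 + (Real.exp c - 1) * r := by
    have := convexOn_exp.2 (Set.mem_univ 0) (Set.mem_univ c)
      (by linarith : (0:ℝ) ≤ 1 - r) hr0 (by ring)
    simp only [smul_eq_mul, mul_zero, zero_add, Real.exp_zero, mul_one] at this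
    calc Real.exp (c * r) = Real.exp ((1 - r) * 0 + r * c) := by ring_nf
      _ ≤ (1 - r) * 1 + r * Real.exp c := by simpa using this
      _ = 1 + (Real.exp c - 1) * r := by ring
  have hEJΔ : EJ + Δ ≤ 2 * Δ := by
    have := abs_le.mp (hEJ' ▸ hEJ)
    linarith [this.2]
  have hEJΔ0 : 0 ≤ EJ + Δ := by
    have := abs_le.mp (hEJ' ▸ hEJ)
    linarith [this.1]
  have hec1 : 0 ≤ Real.exp c - 1 := by
    have := Real.one_le_exp hc0
    linarith
  have : EI + Δ ≤ (1 + (Real.exp c - 1) * r) * (EJ + Δ) := by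
    calc EI + Δ ≤ Real.exp (c * r) * (EJ + Δ) := key
      _ ≤ (1 + (Real.exp c - 1) * r) * (EJ + Δ) :=
        mul_le_mul_of_nonneg_right hexp hEJΔ0
  have h3 : (Real.exp c - 1) * r * (EJ + Δ) ≤ (Real.exp c - 1) * r * (2 * Δ) :=
    mul_le_mul_of_nonneg_left hEJΔ (by positivity)
  rw [hEI, hEJ']
  have hfin : EI ≤ EJ + (Real.exp c - 1) * r * (2 * Δ) := by nlinarith
  calc EI ≤ EJ + (Real.exp c - 1) * r * (2 * Δ) := hfin
    _ = EJ + 2 * (Real.exp c - 1) * r * Δ := by ring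
end
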